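/- Fix a total maximal extraction rate K̄ > 0 and set f(b) := ψ(b)/ψ'(b) − φ_{K̄}(b)/φ_{K̄}'(b) for b ≥ 0 (note f does not depend on n). For each integer n ≥ 1 define b̂(n) as the unique positive solution of f(b) = K̄/(n·r) if φ_{K̄}'(0) < −n·r/K̄, and b̂(n) := 0 otherwise. Then the sequence n ↦ b̂(n) is nonincreasing. -/

import Mathlib

open Set Filter

lemma aux_slope_left {g : ℝ → ℝ} {x0 d : ℝ} (hx0 : 0 < x0) (hg : HasDerivAt g d x0)
    (hd : 0 < d) : ∃ x, 0 < x ∧ x < x0 ∧ g x < g x0 := by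
  have hslope := hasDerivAt_iff_tendsto_slope.mp hg
  have h1 : Tendsto (slope g x0) (nhdsWithin x0 (Iio x0)) (nhds d) :=
    hslope.mono_left (nhdsWithin_mono _ (fun x hx => ne_of_lt hx))
  have h2 : ∀ᶠ x in nhdsWithin x0 (Iio x0), 0 < slope g x0 x :=
    h1.eventually (eventually_gt_nhds hd)
  have h3 : Ioo 0 x0 ∈ nhdsWithin x0 (Iio x0) :=
    Ioo_mem_nhdsLT_of_mem ⟨hx0, le_refl x0⟩
  obtain ⟨x, hx, hpos⟩ := ((eventually_of_mem h3 (fun x hx => hx) : _).and h2).exists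
  refine ⟨x, hx.1, hx.2, ?_⟩
  rw [slope_def_field] at hpos
  rcases div_pos_iff.mp hpos with ⟨h, h'⟩ | ⟨h, h'⟩
  · linarith [hx.2]
  · linarith

lemma aux_slope_right {g : ℝ → ℝ} {x0 d : ℝ} (hg : HasDerivAt g d x0)
    (hd : 0 < d) : ∃ x, x0 < x ∧ g x0 < g x := by
  have hslope := hasDerivAt_iff_tendsto_slope.mp hg
  have h1 : Tendsto (slope g x0) (nhdsWithin x0 (Ioi x0)) (nhds d) :=
    hslope.mono_left (nhdsWithin_mono _ (fun x hx => ne_of_gt hx))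
  have h2 : ∀ᶠ x in nhdsWithin x0 (Ioi x0), 0 < slope g x0 x :=
    h1.eventually (eventually_gt_nhds hd)
  obtain ⟨x, hx, hpos⟩ :=
    ((eventually_of_mem (self_mem_nhdsWithin : Ioi x0 ∈ _) (fun x hx => hx)).and h2).exists
  refine ⟨x, hx, ?_⟩
  rw [slope_def_field] at hpos
  rcases div_pos_iff.mp hpos with ⟨h, h'⟩ | ⟨h, h'⟩
  · linarith
  · linarith [mem_Ioi.mp hx]

lemma aux_deriv_nonneg {g : ℝ → ℝ} {x0 : ℝ} (hm : MonotoneOn g (Ici (0:ℝ)))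
    (hdiff : DifferentiableAt ℝ g x0) (hx0 : 0 ≤ x0) : 0 ≤ deriv g x0 := by
  have hslope := hasDerivAt_iff_tendsto_slope.mp hdiff.hasDerivAt
  have h1 : Tendsto (slope g x0) (nhdsWithin x0 (Ioi x0)) (nhds (deriv g x0)) :=
    hslope.mono_left (nhdsWithin_mono _ (fun x hx => ne_of_gt hx))
  refine ge_of_tendsto h1 ?_
  filter_upwards [self_mem_nhdsWithin] with x hx
  rw [slope_def_field]
  have hxx : x0 < x := mem_Ioi.mp hx
  exact div_nonneg (by linarith [hm hx0 (mem_Ici.mpr (by linarith)) hxx.le]) (by linarith)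

lemma aux_deriv_nonpos {g : ℝ → ℝ} {x0 : ℝ} (hm : AntitoneOn g (Ici (0:ℝ)))
    (hdiff : DifferentiableAt ℝ g x0) (hx0 : 0 ≤ x0) : deriv g x0 ≤ 0 := by
  have hslope := hasDerivAt_iff_tendsto_slope.mp hdiff.hasDerivAt
  have h1 : Tendsto (slope g x0) (nhdsWithin x0 (Ioi x0)) (nhds (deriv g x0)) :=
    hslope.mono_left (nhdsWithin_mono _ (fun x hx => ne_of_gt hx))
  refine le_of_tendsto h1 ?_
  filter_upwards [self_mem_nhdsWithin] with x hx
  rw [slope_def_field]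
  have hxx : x0 < x := mem_Ioi.mp hx
  exact div_nonpos_of_nonpos_of_nonneg
    (by linarith [hm hx0 (mem_Ici.mpr (by linarith)) hxx.le]) (by linarith)

/-- with fixed total maximal extraction rate K̄ (individual rate K̄/n),
the equilibrium threshold b̂(n) (the unique positive solution of
f(b) = K̄/(n·r) when φ_{K̄}'(0) < −n·r/K̄, and 0 otherwise, where
f(b) = ψ(b)/ψ'(b) − φ_{K̄}(b)/φ_{K̄}'(b) does not depend on n) is nonincreasing in n. -/
theorem stmt_3
    (r c : ℝ) (hr : 0 < r) (hc : 0 < c)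
    (μ σ : ℝ → ℝ) (hμ : ContDiff ℝ 1 μ) (hσ : ContDiff ℝ 1 σ)
    (hσpos : ∀ x ≥ (0:ℝ), 0 < σ x ^ 2)
    (hμderiv : ∀ x ≥ (0:ℝ), deriv μ x < r)
    (hμ0 : 0 < μ 0)
    (hμc : ∀ x ≥ c, μ x ≤ r * x - 1 / c)
    (ψ : ℝ → ℝ) (hψC : ContDiff ℝ 3 ψ)
    (hψ0 : ψ 0 = 0) (hψd0 : deriv ψ 0 = 1)
    (hψpos : ∀ x > (0:ℝ), 0 < ψ x)
    (hψmono : MonotoneOn ψ (Ici (0:ℝ)))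
    (hψODE : ∀ x ≥ (0:ℝ),
      (1/2) * σ x ^ 2 * deriv (deriv ψ) x + μ x * deriv ψ x - r * ψ x = 0)
    (φ : ℝ → ℝ → ℝ)
    (hφC : ∀ A ≥ (0:ℝ), ContDiff ℝ 2 (φ A))
    (hφ0 : ∀ A ≥ (0:ℝ), φ A 0 = 1)
    (hφpos : ∀ A ≥ (0:ℝ), ∀ x ≥ (0:ℝ), 0 < φ A x)
    (hφanti : ∀ A ≥ (0:ℝ), AntitoneOn (φ A) (Ici (0:ℝ)))
    (hφlim : ∀ A ≥ (0:ℝ), Tendsto (φ A) atTop (nhds 0))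
    (hφODE : ∀ A ≥ (0:ℝ), ∀ x ≥ (0:ℝ),
      (1/2) * σ x ^ 2 * deriv (deriv (φ A)) x + (μ x - A) * deriv (φ A) x - r * φ A x = 0)
    (Kbar : ℝ) (hKbar : 0 < Kbar)
    (f : ℝ → ℝ)
    (hf : ∀ b, f b = ψ b / deriv ψ b - φ Kbar b / deriv (φ Kbar) b)
    (bhat : ℕ → ℝ)
    (hbhat : ∀ n : ℕ, 1 ≤ n →
      (deriv (φ Kbar) 0 < -((n : ℝ) * r / Kbar) →
        0 < bhat n ∧ f (bhat n) = Kbar / ((n : ℝ) * r) ∧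
        (∀ b' : ℝ, 0 < b' → f b' = Kbar / ((n : ℝ) * r) → b' = bhat n)) ∧
      (¬ deriv (φ Kbar) 0 < -((n : ℝ) * r / Kbar) → bhat n = 0)) :
    ∀ m n : ℕ, 1 ≤ m → m ≤ n → bhat n ≤ bhat m := by
  intro m n hm hmn
  have hn1 : 1 ≤ n := le_trans hm hmn
  have hK0 : (0:ℝ) ≤ Kbar := hKbar.le
  have hmpos : (0:ℝ) < (m:ℝ) := by exact_mod_cast hm
  have hnpos : (0:ℝ) < (n:ℝ) := by exact_mod_cast hn1
  by_cases hPn : deriv (φ Kbar) 0 < -((n : ℝ) * r / Kbar)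
  · -- interesting case: both thresholds are positive solutions
    have hψ2 : ContDiff ℝ 2 (deriv ψ) := by
      have h3 : ContDiff ℝ (2+1) ψ := by exact_mod_cast hψC
      exact (contDiff_succ_iff_deriv.mp h3).2.2
    have Dψ : Differentiable ℝ ψ := hψC.differentiable (by norm_num)
    have Dψ' : Differentiable ℝ (deriv ψ) := hψ2.differentiable (by norm_num)
    have Cψ' : Continuous (deriv ψ) := hψ2.continuous
    have hφK : ContDiff ℝ 2 (φ Kbar) := hφC Kbar hK0
    have hφ1 : ContDiff ℝ 1 (deriv (φ Kbar)) := by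
      have h2 : ContDiff ℝ (1+1) (φ Kbar) := by exact_mod_cast hφK
      exact (contDiff_succ_iff_deriv.mp h2).2.2
    have DφK : Differentiable ℝ (φ Kbar) := hφK.differentiable (by norm_num)
    have DφK' : Differentiable ℝ (deriv (φ Kbar)) := hφ1.differentiable (by norm_num)
    have CφK' : Continuous (deriv (φ Kbar)) := hφ1.continuous
    -- ψ' > 0 everywhere on [0,∞)
    have hnn : ∀ y, 0 < y → 0 ≤ deriv ψ y := fun y hy =>
      aux_deriv_nonneg hψmono Dψ.differentiableAt hy.le
    have hψ'pos : ∀ x ≥ (0:ℝ), 0 < deriv ψ x := by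
      intro x hx
      rcases eq_or_lt_of_le hx with h0 | h0
      · rw [← h0, hψd0]; norm_num
      · rcases (hnn x h0).lt_or_eq with h | h
        · exact h
        · exfalso
          have hσx := hσpos x hx
          have hψx := hψpos x h0
          have hode := hψODE x hx
          rw [← h, mul_zero, add_zero] at hode
          have hD : 0 < deriv (deriv ψ) x := by
            by_contra hD
            push_neg at hD
            have h1 : (1/2) * σ x ^ 2 * deriv (deriv ψ) x ≤ 0 :=
              mul_nonpos_iff.mpr (Or.inl ⟨by positivity, hD⟩)
            nlinarith [mul_pos hr hψx]
          obtain ⟨y, hy0, hyx, hlt⟩ := aux_slope_left h0 Dψ'.differentiableAt.hasDerivAt hD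
          rw [← h] at hlt
          linarith [hnn y hy0]
    have hPm : deriv (φ Kbar) 0 < -((m : ℝ) * r / Kbar) := by
      have hmn' : (m:ℝ) * r / Kbar ≤ (n:ℝ) * r / Kbar := by
        gcongr
      linarith
    obtain ⟨hbn, hfn, huniq⟩ := (hbhat n hn1).1 hPn
    obtain ⟨hbm, hfm, -⟩ := (hbhat m hm).1 hPm
    by_contra hcon
    push_neg at hcon
    have hd0 : deriv (φ Kbar) 0 < 0 := by
      have : (0:ℝ) ≤ (n:ℝ) * r / Kbar := by positivity
      linarith
    -- φ' < 0 everywhere on [0,∞)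
    have hnp : ∀ y, (0:ℝ) ≤ y → deriv (φ Kbar) y ≤ 0 := fun y hy =>
      aux_deriv_nonpos (hφanti Kbar hK0) DφK.differentiableAt hy
    have hφ'neg : ∀ x ≥ (0:ℝ), deriv (φ Kbar) x < 0 := by
      intro x hx
      rcases eq_or_lt_of_le hx with h0 | h0
      · rw [← h0]; exact hd0
      · rcases (hnp x hx).lt_or_eq with h | h
        · exact h
        · exfalso
          have hσx := hσpos x hx
          have hφx := hφpos Kbar hK0 x hx
          have hode := hφODE Kbar hK0 x hx
          rw [h, mul_zero, add_zero] at hode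
          have hD : 0 < deriv (deriv (φ Kbar)) x := by
            by_contra hD
            push_neg at hD
            have h1 : (1/2) * σ x ^ 2 * deriv (deriv (φ Kbar)) x ≤ 0 :=
              mul_nonpos_iff.mpr (Or.inl ⟨by positivity, hD⟩)
            nlinarith [mul_pos hr hφx]
          obtain ⟨y, hyx, hgt⟩ := aux_slope_right DφK'.differentiableAt.hasDerivAt hD
          rw [h] at hgt
          linarith [hnp y (by linarith)]
    -- f is continuous on [0, bhat m]
    have hfeq : f = fun b => ψ b / deriv ψ b - φ Kbar b / deriv (φ Kbar) b := funext hf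
    have hcont : ContinuousOn f (Icc 0 (bhat m)) := by
      rw [hfeq]
      exact (ContinuousOn.div hψC.continuous.continuousOn Cψ'.continuousOn
          (fun x hx => ne_of_gt (hψ'pos x hx.1))).sub
        (ContinuousOn.div hφK.continuous.continuousOn CφK'.continuousOn
          (fun x hx => ne_of_lt (hφ'neg x hx.1)))
    -- f 0 < Kbar/(n r)
    have hf0 : f 0 < Kbar / ((n:ℝ) * r) := by
      have h1 : f 0 = 1 / (-(deriv (φ Kbar) 0)) := by
        rw [hf 0, hψ0, hψd0, hφ0 Kbar hK0, div_neg]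
        norm_num
      rw [h1, div_lt_div_iff₀ (by linarith) (by positivity)]
      have h2 : Kbar * ((n:ℝ) * r / Kbar) < Kbar * (-(deriv (φ Kbar) 0)) := by
        apply mul_lt_mul_of_pos_left _ hKbar
        linarith
      have h3 : Kbar * ((n:ℝ) * r / Kbar) = (n:ℝ) * r := by field_simp
      linarith
    have hle : Kbar / ((n:ℝ) * r) ≤ Kbar / ((m:ℝ) * r) := by
      have hmn' : (m:ℝ) * r ≤ (n:ℝ) * r := by
        have : (m:ℝ) ≤ (n:ℝ) := by exact_mod_cast hmn
        nlinarith
      apply div_le_div_of_nonneg_left hK0 (by positivity) hmn'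
    have hmem : Kbar / ((n:ℝ) * r) ∈ Icc (f 0) (f (bhat m)) :=
      ⟨hf0.le, by rw [hfm]; exact hle⟩
    obtain ⟨b'', hb''mem, hb''⟩ := intermediate_value_Icc hbm.le hcont hmem
    have hb''pos : 0 < b'' := by
      rcases hb''mem.1.lt_or_eq with h | h
      · exact h
      · exfalso; rw [← h] at hb''; rw [hb''] at hf0; exact lt_irrefl _ hf0
    have heq := huniq b'' hb''pos hb''
    have : b'' ≤ bhat m := hb''mem.2
    linarith
  · have hn0 : bhat n = 0 := (hbhat n hn1).2 hPn
    rw [hn0]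
    by_cases hPm : deriv (φ Kbar) 0 < -((m : ℝ) * r / Kbar)
    · exact (((hbhat m hm).1 hPm).1).le
    · rw [(hbhat m hm).2 hPm]
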